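/- arXiv:1810.09270 — 2 statements merged into one kernel-verified Lean document; each statement's English description precedes it below -/
import Mathlib

section
/- Let f : ℝ^d → ℝ be differentiable with L-Lipschitz gradient, h : ℝ^d → ℝ proper closed convex, Ψ = f + h, and η > 0. For any x, g ∈ ℝ^d, let y = prox_{ηh}(x − ηg). Then for all z ∈ ℝ^d: Ψ(y) ≤ Ψ(z) + ⟨y − z, ∇f(x) − g⟩ + (L/2 − 1/(2η))‖y − x‖² + (L/2 + 1/(2η))‖z − x‖² − (1/(2η))‖y − z‖². -/
open scoped RealInnerProductSpace
open MeasureTheory intervalIntegral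

private lemma taylor_bound {d : ℕ} (f : EuclideanSpace ℝ (Fin d) → ℝ) (L : ℝ)
    (hf : Differentiable ℝ f)
    (hLip : ∀ u v, ‖gradient f u - gradient f v‖ ≤ L * ‖u - v‖)
    (a b : EuclideanSpace ℝ (Fin d)) :
    |f b - f a - ⟪gradient f a, b - a⟫| ≤ L / 2 * ‖b - a‖ ^ 2 := by
  set v := b - a with hv
  set φ : ℝ → ℝ := fun t => ⟪gradient f (a + t • v), v⟫ with hφ
  have hderiv : ∀ t : ℝ, HasDerivAt (fun s => f (a + s • v)) (φ t) t := by
    intro t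
    have h1 : HasDerivAt (fun s : ℝ => a + s • v) v t := by
      simpa using ((hasDerivAt_id t).smul_const v).const_add a
    have h2 := ((hf (a + t • v)).hasGradientAt).hasFDerivAt
    have h3 := h2.comp_hasDerivAt t h1
    simpa [hφ, InnerProductSpace.toDual_apply_apply, Function.comp_def] using h3
  have hgradcont : Continuous (gradient f) := by
    have hL : LipschitzWith (Real.toNNReal (max L 0)) (gradient f) := by
      apply LipschitzWith.of_dist_le_mul
      intro u w
      rw [dist_eq_norm, dist_eq_norm, Real.coe_toNNReal _ (le_max_right L 0)]
      calc ‖gradient f u - gradient f w‖ ≤ L * ‖u - w‖ := hLip u w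
        _ ≤ max L 0 * ‖u - w‖ :=
          mul_le_mul_of_nonneg_right (le_max_left _ _) (norm_nonneg _)
    exact hL.continuous
  have hφcont : Continuous φ := by
    apply Continuous.inner
    · exact hgradcont.comp (continuous_const.add (continuous_id.smul continuous_const))
    · exact continuous_const
  have hInt : IntervalIntegrable φ volume 0 1 := hφcont.intervalIntegrable 0 1
  have key : ∫ t in (0:ℝ)..1, φ t = f b - f a := by
    have := integral_eq_sub_of_hasDerivAt (fun t _ => hderiv t) hInt
    simpa [hv] using this
  have hpt : ∀ t ∈ Set.Icc (0:ℝ) 1, |φ t - φ 0| ≤ L * t * ‖v‖ ^ 2 := by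
    intro t ht
    have h1 : φ t - φ 0 = ⟪gradient f (a + t • v) - gradient f (a + (0:ℝ) • v), v⟫ := by
      rw [inner_sub_left]
    have h2 := abs_real_inner_le_norm (gradient f (a + t • v) - gradient f (a + (0:ℝ) • v)) v
    have h3 := hLip (a + t • v) (a + (0:ℝ) • v)
    have h4 : ‖(a + t • v) - (a + (0:ℝ) • v)‖ = t * ‖v‖ := by
      have : (a + t • v) - (a + (0:ℝ) • v) = t • v := by module
      rw [this, norm_smul, Real.norm_eq_abs, abs_of_nonneg ht.1]
    rw [h1]
    calc |⟪_, v⟫| ≤ ‖gradient f (a + t • v) - gradient f (a + (0:ℝ) • v)‖ * ‖v‖ := h2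
      _ ≤ (L * (t * ‖v‖)) * ‖v‖ := by
          apply mul_le_mul_of_nonneg_right _ (norm_nonneg _)
          rw [← h4]; exact h3
      _ = L * t * ‖v‖ ^ 2 := by ring
  have hIntAbs : IntervalIntegrable (fun t => |φ t - φ 0|) volume 0 1 :=
    ((hφcont.sub continuous_const).abs).intervalIntegrable 0 1
  have hIntBound : IntervalIntegrable (fun t => L * t * ‖v‖ ^ 2) volume 0 1 :=
    ((continuous_const.mul continuous_id).mul continuous_const : Continuous fun t : ℝ => L * t * ‖v‖ ^ 2).intervalIntegrable 0 1
  have hmono : ∫ t in (0:ℝ)..1, |φ t - φ 0| ≤ ∫ t in (0:ℝ)..1, L * t * ‖v‖ ^ 2 := by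
    apply integral_mono_on (by norm_num) hIntAbs hIntBound hpt
  have hb : ∫ t in (0:ℝ)..1, L * t * ‖v‖ ^ 2 = L / 2 * ‖v‖ ^ 2 := by
    have : (fun t : ℝ => L * t * ‖v‖ ^ 2) = fun t : ℝ => (L * ‖v‖ ^ 2) * t := by
      funext t; ring
    rw [this, intervalIntegral.integral_const_mul, integral_id]
    ring
  have habs : |∫ t in (0:ℝ)..1, (φ t - φ 0)| ≤ ∫ t in (0:ℝ)..1, |φ t - φ 0| :=
    intervalIntegral.abs_integral_le_integral_abs (by norm_num)
  have hsub : ∫ t in (0:ℝ)..1, (φ t - φ 0) = (f b - f a) - φ 0 := by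
    rw [integral_sub hInt (intervalIntegrable_const), key]
    simp
  have hφ0 : φ 0 = ⟪gradient f a, b - a⟫ := by simp [hφ, hv]
  rw [← hφ0]
  calc |f b - f a - φ 0| = |∫ t in (0:ℝ)..1, (φ t - φ 0)| := by rw [hsub]
    _ ≤ ∫ t in (0:ℝ)..1, |φ t - φ 0| := habs
    _ ≤ L / 2 * ‖v‖ ^ 2 := by rw [← hb]; exact hmono

open scoped RealInnerProductSpace

private lemma norm_combo_sq {d : ℕ} (a b : EuclideanSpace ℝ (Fin d)) (t : ℝ) :
    ‖(1 - t) • a + t • b‖ ^ 2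
      = (1 - t) * ‖a‖ ^ 2 + t * ‖b‖ ^ 2 - t * (1 - t) * ‖a - b‖ ^ 2 := by
  have e1 : ‖(1 - t) • a + t • b‖ ^ 2
      = (1 - t) ^ 2 * ‖a‖ ^ 2 + 2 * ((1 - t) * (t * ⟪a, b⟫)) + t ^ 2 * ‖b‖ ^ 2 := by
    rw [norm_add_sq_real, norm_smul, norm_smul, real_inner_smul_left, real_inner_smul_right]
    simp only [Real.norm_eq_abs, mul_pow, sq_abs]
  have e2 : ‖a - b‖ ^ 2 = ‖a‖ ^ 2 - 2 * ⟪a, b⟫ + ‖b‖ ^ 2 := norm_sub_sq_real a b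
  linear_combination e1 + t * (1 - t) * e2

private lemma prox_strong {d : ℕ} (h : EuclideanSpace ℝ (Fin d) → ℝ)
    (hconv : ConvexOn ℝ Set.univ h) (η : ℝ) (hη : 0 < η)
    (u y : EuclideanSpace ℝ (Fin d))
    (hy : ∀ w, h y + (1 / (2 * η)) * ‖y - u‖ ^ 2 ≤ h w + (1 / (2 * η)) * ‖w - u‖ ^ 2)
    (z : EuclideanSpace ℝ (Fin d)) :
    h y ≤ h z + (1 / (2 * η)) * (‖z - u‖ ^ 2 - ‖y - u‖ ^ 2 - ‖y - z‖ ^ 2) := by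
  set c := 1 / (2 * η) with hc
  have hcpos : 0 < c := by positivity
  have step : ∀ t : ℝ, 0 < t → t < 1 →
      h y - h z ≤ c * (‖z - u‖ ^ 2 - ‖y - u‖ ^ 2) - c * (1 - t) * ‖y - z‖ ^ 2 := by
    intro t ht0 ht1
    have hw := hy ((1 - t) • y + t • z)
    have hcv : h ((1 - t) • y + t • z) ≤ (1 - t) * h y + t * h z := by
      have h01 : (0:ℝ) ≤ 1 - t := by linarith
      have hsum : (1 - t) + t = 1 := by ring
      have := hconv.2 (Set.mem_univ y) (Set.mem_univ z) h01 (le_of_lt ht0) hsum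
      simpa [smul_eq_mul] using this
    have hnorm : ‖((1 - t) • y + t • z) - u‖ ^ 2
        = (1 - t) * ‖y - u‖ ^ 2 + t * ‖z - u‖ ^ 2 - t * (1 - t) * ‖y - z‖ ^ 2 := by
      have e1 : ((1 - t) • y + t • z) - u = (1 - t) • (y - u) + t • (z - u) := by module
      have e2 : (y - u) - (z - u) = y - z := by abel
      rw [e1, norm_combo_sq, e2]
    rw [hnorm] at hw
    have key : t * (h y - h z)
        ≤ t * (c * (‖z - u‖ ^ 2 - ‖y - u‖ ^ 2) - c * (1 - t) * ‖y - z‖ ^ 2) := by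
      nlinarith [hw, hcv]
    exact le_of_mul_le_mul_left key ht0
  have B0 : 0 ≤ c * ‖y - z‖ ^ 2 := by positivity
  have main : h y - h z ≤ c * (‖z - u‖ ^ 2 - ‖y - u‖ ^ 2) - c * ‖y - z‖ ^ 2 := by
    apply le_of_forall_pos_le_add
    intro ε hε
    set M := c * ‖y - z‖ ^ 2 with hM
    set t := min (1/2 : ℝ) (ε / (M + 1)) with ht
    have ht0 : 0 < t := lt_min (by norm_num) (by positivity)
    have ht1 : t < 1 := lt_of_le_of_lt (min_le_left _ _) (by norm_num)
    have hstep := step t ht0 ht1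
    have htM : t * M ≤ ε := by
      have h1 : t ≤ ε / (M + 1) := min_le_right _ _
      have h2 : t * M ≤ (ε / (M + 1)) * M := mul_le_mul_of_nonneg_right h1 B0
      have h3 : (ε / (M + 1)) * M ≤ ε := by
        rw [div_mul_eq_mul_div, div_le_iff₀ (by linarith)]
        nlinarith
      linarith
    have expand : c * (1 - t) * ‖y - z‖ ^ 2 = M - t * M := by rw [hM]; ring
    rw [expand] at hstep
    linarith
  linarith [main]

/-- key descent-type inequality for the prox step (Lemma 4 of the paper). -/
theorem stmt5 {d : ℕ} (f h : EuclideanSpace ℝ (Fin d) → ℝ) (L : ℝ)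
    (hf : Differentiable ℝ f)
    (hLip : ∀ u v, ‖gradient f u - gradient f v‖ ≤ L * ‖u - v‖)
    (hconv : ConvexOn ℝ Set.univ h) (η : ℝ) (hη : 0 < η)
    (x g y : EuclideanSpace ℝ (Fin d))
    (hy : ∀ w, h y + (1 / (2 * η)) * ‖y - (x - η • g)‖ ^ 2 ≤
               h w + (1 / (2 * η)) * ‖w - (x - η • g)‖ ^ 2) :
    ∀ z, (f y + h y) ≤ (f z + h z) + ⟪y - z, gradient f x - g⟫
          + (L / 2 - 1 / (2 * η)) * ‖y - x‖ ^ 2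
          + (L / 2 + 1 / (2 * η)) * ‖z - x‖ ^ 2
          - (1 / (2 * η)) * ‖y - z‖ ^ 2 := by
  intro z
  have T1 := taylor_bound f L hf hLip x y
  have T2 := taylor_bound f L hf hLip x z
  have A1 : f y - f x - ⟪gradient f x, y - x⟫ ≤ L / 2 * ‖y - x‖ ^ 2 := (abs_le.1 T1).2
  have A2 : -(L / 2 * ‖z - x‖ ^ 2) ≤ f z - f x - ⟪gradient f x, z - x⟫ := (abs_le.1 T2).1
  have P := prox_strong h hconv η hη (x - η • g) y hy z
  have hyu : ‖y - (x - η • g)‖ ^ 2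
      = ‖y - x‖ ^ 2 + 2 * η * ⟪y - x, g⟫ + η ^ 2 * ‖g‖ ^ 2 := by
    have e : y - (x - η • g) = (y - x) + η • g := by module
    rw [e, norm_add_sq_real, real_inner_smul_right, norm_smul]
    simp only [Real.norm_eq_abs, mul_pow, sq_abs]
    ring
  have hzu : ‖z - (x - η • g)‖ ^ 2
      = ‖z - x‖ ^ 2 + 2 * η * ⟪z - x, g⟫ + η ^ 2 * ‖g‖ ^ 2 := by
    have e : z - (x - η • g) = (z - x) + η • g := by module
    rw [e, norm_add_sq_real, real_inner_smul_right, norm_smul]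
    simp only [Real.norm_eq_abs, mul_pow, sq_abs]
    ring
  rw [hyu, hzu] at P
  have Pexp : (1 / (2 * η)) * ((‖z - x‖ ^ 2 + 2 * η * ⟪z - x, g⟫ + η ^ 2 * ‖g‖ ^ 2)
        - (‖y - x‖ ^ 2 + 2 * η * ⟪y - x, g⟫ + η ^ 2 * ‖g‖ ^ 2) - ‖y - z‖ ^ 2)
      = (1 / (2 * η)) * ‖z - x‖ ^ 2 - (1 / (2 * η)) * ‖y - x‖ ^ 2
        - (1 / (2 * η)) * ‖y - z‖ ^ 2 + ⟪z - x, g⟫ - ⟪y - x, g⟫ := by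
    field_simp
    ring
  rw [Pexp] at P
  have hinner : ⟪y - z, gradient f x - g⟫ = ⟪y - z, gradient f x⟫ - ⟪y - z, g⟫ :=
    inner_sub_right _ _ _
  have h1 : ⟪gradient f x, y - x⟫ - ⟪gradient f x, z - x⟫ = ⟪y - z, gradient f x⟫ := by
    rw [← inner_sub_right, real_inner_comm]
    congr 1
    abel
  have h2 : ⟪y - x, g⟫ - ⟪z - x, g⟫ = ⟪y - z, g⟫ := by
    rw [← inner_sub_left]
    congr 1
    abel
  rw [hinner]
  linarith [A1, A2, P, h1, h2]
end

section
/- Let f : ℝ^d → ℝ be differentiable with blockwise Lipschitz constants L_j (i.e., ‖∇_j f(x) − ∇_j f(x + U_j α)‖ ≤ L_j‖α‖ for any block perturbation α in block j, where U_j embeds ℝ^{d_j} into ℝ^d), let h_j be proper closed convex, Ψ(x) = f(x) + ∑_j h_j(x_j), and η > 0. Fix a block j, set y_j = prox_{ηh_j}(x_j − ηg_j) for some g_j ∈ ℝ^{d_j}, and let y agree with x on all blocks j' ≠ j. Then for all z ∈ ℝ^d that agree with x on blocks j' ≠ j: Ψ(y) ≤ Ψ(z) + ⟨∇_j f(x)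 − g_j, y_j − z_j⟩ + (L_j/2 − 1/(2η))‖y_j − x_j‖² + (L_j/2 + 1/(2η))‖z_j − x_j‖² − (1/(2η))‖y_j − z_j‖². -/
open scoped RealInnerProductSpace

section Aux

variable {E : Type*} [NormedAddCommGroup E] [InnerProductSpace ℝ E]

lemma comb_sq (a b : E) (t : ℝ) :
    ‖(1 - t) • a + t • b‖ ^ 2
      = (1 - t) * ‖a‖ ^ 2 + t * ‖b‖ ^ 2 - t * (1 - t) * ‖a - b‖ ^ 2 := by
  have h2 : ‖(1 - t) • a + t • b‖ ^ 2
      = (1 - t) ^ 2 * ‖a‖ ^ 2 + 2 * ((1 - t) * t * ⟪a, b⟫) + t ^ 2 * ‖b‖ ^ 2 := by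
    rw [norm_add_sq_real, real_inner_smul_left, real_inner_smul_right,
      norm_smul, norm_smul]
    simp [mul_pow, sq_abs]
    ring
  rw [h2, norm_sub_sq_real]
  ring

lemma prox_strong_s13 (φ : E → ℝ) (hφ : ConvexOn ℝ Set.univ φ) (c : ℝ)
    (p ymin : E)
    (hmin : ∀ w, φ ymin + c * ‖ymin - p‖ ^ 2 ≤ φ w + c * ‖w - p‖ ^ 2)
    (w : E) :
    φ ymin + c * ‖ymin - p‖ ^ 2 ≤ φ w + c * ‖w - p‖ ^ 2 - c * ‖w - ymin‖ ^ 2 := by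
  set K := ‖w - ymin‖ ^ 2 with hK
  have key : ∀ t ∈ Set.Ioc (0:ℝ) 1,
      φ ymin + c * ‖ymin - p‖ ^ 2 ≤ φ w + c * ‖w - p‖ ^ 2 - c * (1 - t) * K := by
    intro t ht
    obtain ⟨ht0, ht1⟩ := ht
    have hmin' := hmin ((1 - t) • ymin + t • w)
    have hconv := hφ.2 (Set.mem_univ ymin) (Set.mem_univ w)
      (by linarith : (0:ℝ) ≤ 1 - t) (le_of_lt ht0) (by ring)
    simp only [smul_eq_mul] at hconv
    have hq : ‖(1 - t) • ymin + t • w - p‖ ^ 2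
        = (1 - t) * ‖ymin - p‖ ^ 2 + t * ‖w - p‖ ^ 2 - t * (1 - t) * K := by
      have hrw : (1 - t) • ymin + t • w - p = (1 - t) • (ymin - p) + t • (w - p) := by
        module
      rw [hrw, comb_sq]
      have : (ymin - p) - (w - p) = -(w - ymin) := by abel
      rw [this, norm_neg]
    rw [hq] at hmin'
    have hineq : t * (φ ymin + c * ‖ymin - p‖ ^ 2)
        ≤ t * (φ w + c * ‖w - p‖ ^ 2 - c * (1 - t) * K) := by nlinarith
    exact le_of_mul_le_mul_left hineq ht0
  have hev : ∀ᶠ t in nhdsWithin (0:ℝ) (Set.Ioi 0),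
      φ ymin + c * ‖ymin - p‖ ^ 2 ≤ φ w + c * ‖w - p‖ ^ 2 - c * (1 - t) * K :=
    Filter.eventually_of_mem (Ioc_mem_nhdsGT_of_mem (by constructor <;> norm_num)) key
  have hten : Filter.Tendsto (fun t : ℝ => φ w + c * ‖w - p‖ ^ 2 - c * (1 - t) * K)
      (nhdsWithin (0:ℝ) (Set.Ioi 0)) (nhds (φ w + c * ‖w - p‖ ^ 2 - c * K)) := by
    have : Filter.Tendsto (fun t : ℝ => φ w + c * ‖w - p‖ ^ 2 - c * (1 - t) * K)
        (nhds (0:ℝ)) (nhds (φ w + c * ‖w - p‖ ^ 2 - c * (1 - 0) * K)) := by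
      apply Continuous.tendsto
      continuity
    simpa using this.mono_left nhdsWithin_le_nhds
  exact ge_of_tendsto hten hev

end Aux

set_option maxHeartbeats 2000000 in
/-- blockwise descent inequality for a single-block prox update. -/
theorem stmt13 {M : ℕ} {d : Fin M → ℕ}
    (f : PiLp 2 (fun j => EuclideanSpace ℝ (Fin (d j))) → ℝ)
    (h : ∀ j, EuclideanSpace ℝ (Fin (d j)) → ℝ)
    (hconv : ∀ j, ConvexOn ℝ Set.univ (h j))
    (L : Fin M → ℝ)
    (hf : Differentiable ℝ f)
    -- blockwise Lipschitz partial gradients: perturbing only block j changes ∇_j f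
    -- at a rate at most `L j` in that block
    (hLip : ∀ (j : Fin M) (u v : PiLp 2 (fun j => EuclideanSpace ℝ (Fin (d j)))),
        (∀ j' ≠ j, v j' = u j') →
        ‖gradient f u j - gradient f v j‖ ≤ L j * ‖v j - u j‖)
    (η : ℝ) (hη : 0 < η) (j : Fin M)
    (x y z : PiLp 2 (fun j => EuclideanSpace ℝ (Fin (d j))))
    (gj : EuclideanSpace ℝ (Fin (d j)))
    -- y agrees with x off block j and y j is the block-j prox point
    (hyoff : ∀ j' ≠ j, y j' = x j')
    (hyj : ∀ w, h j (y j) + (1 / (2 * η)) * ‖y j - (x j - η • gj)‖ ^ 2 ≤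
                h j w + (1 / (2 * η)) * ‖w - (x j - η • gj)‖ ^ 2)
    -- z agrees with x off block j
    (hzoff : ∀ j' ≠ j, z j' = x j') :
    f y + (∑ j', h j' (y j')) ≤
      f z + (∑ j', h j' (z j')) + ⟪gradient f x j - gj, y j - z j⟫
      + (L j / 2 - 1 / (2 * η)) * ‖y j - x j‖ ^ 2
      + (L j / 2 + 1 / (2 * η)) * ‖z j - x j‖ ^ 2
      - (1 / (2 * η)) * ‖y j - z j‖ ^ 2 := by
  -- Blockwise descent lemma (two-sided)
  have hdesc : ∀ u v : PiLp 2 (fun j => EuclideanSpace ℝ (Fin (d j))),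
      (∀ j' ≠ j, v j' = u j') →
      |f v - f u - ⟪gradient f u j, v j - u j⟫| ≤ L j / 2 * ‖v j - u j‖ ^ 2 := by
    intro u v hv
    set w := v - u with hwdef
    have hw0 : ∀ j' ≠ j, w j' = 0 := by
      intro j' hj'
      rw [hwdef, PiLp.sub_apply, hv j' hj', sub_self]
    have hwj : w j = v j - u j := by rw [hwdef, PiLp.sub_apply]
    set I : ℝ := ⟪gradient f u j, v j - u j⟫ with hI
    set K : ℝ := ‖v j - u j‖ ^ 2 with hKdef
    have hinner : ∀ p : PiLp 2 (fun j => EuclideanSpace ℝ (Fin (d j))),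
        ⟪gradient f p, w⟫ = ⟪gradient f p j, w j⟫ := by
      intro p
      rw [PiLp.inner_apply]
      exact Finset.sum_eq_single j
        (fun b _ hb => by rw [hw0 b hb, inner_zero_right])
        (fun hj => absurd (Finset.mem_univ j) hj)
    have hF : ∀ t : ℝ, HasDerivAt (fun s : ℝ => f (u + s • w))
        ⟪gradient f (u + t • w), w⟫ t := by
      intro t
      have hline : HasDerivAt (fun s : ℝ => u + s • w) w t := by
        simpa using ((hasDerivAt_id t).smul_const w).const_add u
      have hgrad : HasFDerivAt f
          (InnerProductSpace.toDual ℝ _ (gradient f (u + t • w))) (u + t • w) :=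
        hasGradientAt_iff_hasFDerivAt.mp (hf (u + t • w)).hasGradientAt
      have := hgrad.comp_hasDerivAt t hline
      simpa [InnerProductSpace.toDual_apply_apply, Function.comp_def] using this
    -- derivative bound
    have hder : ∀ t ∈ Set.Icc (0:ℝ) 1,
        |⟪gradient f (u + t • w), w⟫ - I| ≤ L j * t * K := by
      intro t ht
      rw [hinner, hI, ← hwj]
      have hoff : ∀ j' ≠ j, (u + t • w) j' = u j' := by
        intro j' hj'
        rw [PiLp.add_apply, PiLp.smul_apply, hw0 j' hj', smul_zero, add_zero]
      have hlip := hLip j u (u + t • w) hoff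
      have hval : (u + t • w) j - u j = t • w j := by
        rw [PiLp.add_apply, PiLp.smul_apply]; abel
      rw [hval] at hlip
      have hnorm : ‖t • w j‖ = t * ‖w j‖ := by
        rw [norm_smul, Real.norm_eq_abs, abs_of_nonneg ht.1]
      rw [hnorm] at hlip
      have hcs : |⟪gradient f (u + t • w) j - gradient f u j, w j⟫|
          ≤ ‖gradient f (u + t • w) j - gradient f u j‖ * ‖w j‖ :=
        abs_real_inner_le_norm _ _
      have hrev : ‖gradient f (u + t • w) j - gradient f u j‖
          = ‖gradient f u j - gradient f (u + t • w) j‖ := norm_sub_rev _ _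
      have h1 : |⟪gradient f (u + t • w) j, w j⟫ - ⟪gradient f u j, w j⟫|
          ≤ L j * t * ‖w j‖ * ‖w j‖ := by
        rw [← inner_sub_left]
        calc |⟪gradient f (u + t • w) j - gradient f u j, w j⟫|
            ≤ ‖gradient f (u + t • w) j - gradient f u j‖ * ‖w j‖ := hcs
          _ ≤ L j * (t * ‖w j‖) * ‖w j‖ := by
              rw [hrev] at hcs ⊢
              exact mul_le_mul_of_nonneg_right hlip (norm_nonneg _)
          _ = L j * t * ‖w j‖ * ‖w j‖ := by ring
      calc |⟪gradient f (u + t • w) j, w j⟫ - ⟪gradient f u j, w j⟫|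
          ≤ L j * t * ‖w j‖ * ‖w j‖ := h1
        _ = L j * t * K := by rw [hKdef, ← hwj]; ring
    -- two monotonicity arguments
    have hG : ∀ t : ℝ, HasDerivAt
        (fun s : ℝ => f (u + s • w) - s * I - L j / 2 * s ^ 2 * K)
        (⟪gradient f (u + t • w), w⟫ - I - L j * t * K) t := by
      intro t
      have h2 : HasDerivAt (fun s : ℝ => s * I) I t := by
        simpa using (hasDerivAt_id t).mul_const I
      have h3 : HasDerivAt (fun s : ℝ => L j / 2 * s ^ 2 * K) (L j * t * K) t := by
        have := ((hasDerivAt_pow 2 t).const_mul (L j / 2)).mul_const K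
        refine this.congr_deriv ?_
        push_cast; ring
      exact ((hF t).sub h2).sub h3
    have hH : ∀ t : ℝ, HasDerivAt
        (fun s : ℝ => f (u + s • w) - s * I + L j / 2 * s ^ 2 * K)
        (⟪gradient f (u + t • w), w⟫ - I + L j * t * K) t := by
      intro t
      have h2 : HasDerivAt (fun s : ℝ => s * I) I t := by
        simpa using (hasDerivAt_id t).mul_const I
      have h3 : HasDerivAt (fun s : ℝ => L j / 2 * s ^ 2 * K) (L j * t * K) t := by
        have := ((hasDerivAt_pow 2 t).const_mul (L j / 2)).mul_const K
        refine this.congr_deriv ?_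
        push_cast; ring
      exact ((hF t).sub h2).add h3
    have hGanti : AntitoneOn
        (fun s : ℝ => f (u + s • w) - s * I - L j / 2 * s ^ 2 * K)
        (Set.Icc 0 1) := by
      apply antitoneOn_of_deriv_nonpos (convex_Icc 0 1)
      · exact fun t _ => (hG t).continuousAt.continuousWithinAt
      · intro t ht
        exact ((hG t).differentiableAt).differentiableWithinAt
      · intro t ht
        rw [interior_Icc] at ht
        rw [(hG t).deriv]
        have := hder t ⟨le_of_lt ht.1, le_of_lt ht.2⟩
        have := abs_le.mp this
        linarith [this.2]
    have hHmono : MonotoneOn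
        (fun s : ℝ => f (u + s • w) - s * I + L j / 2 * s ^ 2 * K)
        (Set.Icc 0 1) := by
      apply monotoneOn_of_deriv_nonneg (convex_Icc 0 1)
      · exact fun t _ => (hH t).continuousAt.continuousWithinAt
      · intro t ht
        exact ((hH t).differentiableAt).differentiableWithinAt
      · intro t ht
        rw [interior_Icc] at ht
        rw [(hH t).deriv]
        have := hder t ⟨le_of_lt ht.1, le_of_lt ht.2⟩
        have := abs_le.mp this
        linarith [this.1]
    have hmem0 : (0:ℝ) ∈ Set.Icc (0:ℝ) 1 := by constructor <;> norm_num
    have hmem1 : (1:ℝ) ∈ Set.Icc (0:ℝ) 1 := by constructor <;> norm_num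
    have hG10 := hGanti hmem0 hmem1 (by norm_num)
    have hH01 := hHmono hmem0 hmem1 (by norm_num)
    have huv : u + (1:ℝ) • w = v := by rw [one_smul, hwdef]; abel
    have hu0 : u + (0:ℝ) • w = u := by rw [zero_smul, add_zero]
    simp only [huv, hu0, one_pow, zero_pow, mul_one, mul_zero, zero_mul,
      sub_zero, add_zero] at hG10 hH01
    rw [abs_le]
    constructor <;> [skip; skip] <;> nlinarith [hG10, hH01]
  -- sums
  have hysum : (∑ j', h j' (y j'))
      = h j (y j) + ∑ j' ∈ Finset.univ.erase j, h j' (x j') := by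
    rw [← Finset.add_sum_erase _ _ (Finset.mem_univ j)]
    congr 1
    exact Finset.sum_congr rfl fun k hk => by rw [hyoff k (Finset.ne_of_mem_erase hk)]
  have hzsum : (∑ j', h j' (z j'))
      = h j (z j) + ∑ j' ∈ Finset.univ.erase j, h j' (x j') := by
    rw [← Finset.add_sum_erase _ _ (Finset.mem_univ j)]
    congr 1
    exact Finset.sum_congr rfl fun k hk => by rw [hzoff k (Finset.ne_of_mem_erase hk)]
  -- strong prox inequality
  have hprox := prox_strong_s13 (h j) (hconv j) (1 / (2 * η)) (x j - η • gj) (y j) hyj (z j)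
  -- expansions
  have hexp : ∀ a : EuclideanSpace ℝ (Fin (d j)),
      ‖a - (x j - η • gj)‖ ^ 2
        = ‖a - x j‖ ^ 2 + 2 * η * ⟪gj, a - x j⟫ + η ^ 2 * ‖gj‖ ^ 2 := by
    intro a
    have : a - (x j - η • gj) = (a - x j) + η • gj := by abel
    rw [this, norm_add_sq_real, real_inner_smul_right, real_inner_comm, norm_smul]
    simp [mul_pow, sq_abs]
    ring
  rw [hexp (y j), hexp (z j)] at hprox
  have hη' : η ≠ 0 := ne_of_gt hη
  have e2y : (1 / (2 * η)) * (2 * η * ⟪gj, y j - x j⟫) = ⟪gj, y j - x j⟫ := by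
    field_simp
  have e2z : (1 / (2 * η)) * (2 * η * ⟪gj, z j - x j⟫) = ⟪gj, z j - x j⟫ := by
    field_simp
  have hprox' : h j (y j) + (1 / (2 * η)) * ‖y j - x j‖ ^ 2 + ⟪gj, y j - x j⟫
      ≤ h j (z j) + (1 / (2 * η)) * ‖z j - x j‖ ^ 2 + ⟪gj, z j - x j⟫
        - (1 / (2 * η)) * ‖z j - y j‖ ^ 2 := by
    have d1 : (1 / (2 * η)) * (‖y j - x j‖ ^ 2 + 2 * η * ⟪gj, y j - x j⟫ + η ^ 2 * ‖gj‖ ^ 2)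
        = (1 / (2 * η)) * ‖y j - x j‖ ^ 2 + ⟪gj, y j - x j⟫
          + (1 / (2 * η)) * (η ^ 2 * ‖gj‖ ^ 2) := by
      rw [mul_add, mul_add, e2y]
    have d2 : (1 / (2 * η)) * (‖z j - x j‖ ^ 2 + 2 * η * ⟪gj, z j - x j⟫ + η ^ 2 * ‖gj‖ ^ 2)
        = (1 / (2 * η)) * ‖z j - x j‖ ^ 2 + ⟪gj, z j - x j⟫
          + (1 / (2 * η)) * (η ^ 2 * ‖gj‖ ^ 2) := by
      rw [mul_add, mul_add, e2z]
    rw [d1, d2] at hprox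
    linarith
  -- inner product identity
  have e1 : ⟪gradient f x j - gj, y j - z j⟫
      = ⟪gradient f x j, y j - x j⟫ - ⟪gradient f x j, z j - x j⟫
        - ⟪gj, y j - x j⟫ + ⟪gj, z j - x j⟫ := by
    have hyz : y j - z j = (y j - x j) - (z j - x j) := by abel
    rw [hyz]
    simp only [inner_sub_left, inner_sub_right]
    ring
  have hrev : ‖z j - y j‖ = ‖y j - z j‖ := norm_sub_rev _ _
  rw [hrev] at hprox'
  have hy1 := abs_le.mp (hdesc x y hyoff)
  have hz1 := abs_le.mp (hdesc x z hzoff)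
  rw [hysum, hzsum, e1]
  linarith [hy1.2, hz1.1, hprox']
end
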